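/- Let n ≥ 3 be an integer and let x_1, …, x_n be nonnegative real numbers with x_1 + ⋯ + x_n = 1. Then equality holds in the inequality n·∑_{i=1}^n x_i³ + 1/(n-1) = ((2n-1)/(n-1))·∑_{i=1}^n x_i² if and only if either x_i = 1/n for all i, or there exists an index i₀ such that x_{i₀} = 0 and x_i = 1/(n-1) for all i ≠ i₀. -/

import Mathlib

set_option maxHeartbeats 1000000

private lemma aux_Mpos (N s M D : ℝ) (hN3 : 3 ≤ N) (hs : 0 < s) (hD : 0 ≤ D)
    (hMD : M*(N-1) = s^2 + D*(N-1)) : 0 < M := by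
  by_contra h
  push_neg at h
  have h1 : M*(N-1) ≤ 0 := mul_nonpos_of_nonpos_of_nonneg h (by linarith)
  have h2 : 0 ≤ D*(N-1) := mul_nonneg hD (by linarith)
  linarith [pow_pos hs 2]

private lemma aux_pt_global (N u : ℝ) (hN3 : 3 ≤ N) (h0 : 0 ≤ u) (h1 : N*u ≤ 1) :
    N^2*(N-1)*u^3 ≤ N*(N-2)*u^2 + u := by
  have key : N*(N-2)*u^2 + u - N^2*(N-1)*u^3
      = u*(1 - N*u)*(N*(N-1)*u + 1) := by ring
  have h2 : 0 ≤ N*(N-1)*u := mul_nonneg (mul_nonneg (by linarith) (by linarith)) h0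
  have h4 : 0 ≤ u*(1 - N*u)*(N*(N-1)*u + 1) :=
    mul_nonneg (mul_nonneg h0 (by linarith)) (by linarith)
  linarith [key, h4]

private lemma aux_pt_small (N s u : ℝ) (hN3 : 3 ≤ N) (h0 : 0 ≤ u) (hus : u ≤ s)
    (hA : N*(N-1)*s < N-2) : N*(N-1)*u^3 ≤ (N-2)*u^2 := by
  have h2 : N*(N-1)*u ≤ N*(N-1)*s :=
    mul_le_mul_of_nonneg_left hus (mul_nonneg (by linarith) (by linarith))
  have h3 : 0 ≤ u^2*((N-2) - N*(N-1)*u) := mul_nonneg (sq_nonneg u) (by linarith)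
  nlinarith [h3]

private lemma aux_pt_chord (N s u : ℝ) (hN3 : 3 ≤ N) (h0 : 0 ≤ u) (hus : u ≤ s)
    (hc : N-2 ≤ N*(N-1)*s) :
    N*(N-1)*u^3 ≤ (N-2)*u^2 + (N*(N-1)*s^2 - (N-2)*s)*u := by
  have key : (N-2)*u^2 + (N*(N-1)*s^2 - (N-2)*s)*u - N*(N-1)*u^3
      = u*(s - u)*(N*(N-1)*(u + s) - (N-2)) := by ring
  have h2 : 0 ≤ N*(N-1)*u := mul_nonneg (mul_nonneg (by linarith) (by linarith)) h0
  have h3 : 0 ≤ N*(N-1)*(u + s) - (N-2) := by nlinarith [h2, hc]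
  have h4 : 0 ≤ u*(s - u)*(N*(N-1)*(u + s) - (N-2)) :=
    mul_nonneg (mul_nonneg h0 (by linarith)) h3
  linarith [key, h4]

private lemma aux_smallA (N M T Tm Ms : ℝ) (hN3 : 3 ≤ N) (hMpos : 0 < M) (hT : 0 ≤ T)
    (hE : N*(N-1)*T + (N-2)*M = N*(N-1)*Tm - (N-2)*Ms)
    (hsum : N*(N-1)*Tm ≤ (N-2)*Ms) : False := by
  have h1 : 0 ≤ N*(N-1)*T := mul_nonneg (mul_nonneg (by linarith) (by linarith)) hT
  have h2 : 0 < (N-2)*M := mul_pos (by linarith) hMpos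
  linarith

private lemma aux_big (N s M D T Tm Ms : ℝ) (hN3 : 3 ≤ N) (hs : 0 < s) (hD : 0 ≤ D)
    (hMD : M*(N-1) = s^2 + D*(N-1)) (hCS : M^2 ≤ s*T)
    (hE : N*(N-1)*T + (N-2)*M = N*(N-1)*Tm - (N-2)*Ms)
    (hsum : N^2*(N-1)*Tm ≤ N*(N-2)*Ms + s) (hBig : 1 < N*s) : False := by
  have hEN := congrArg (fun z => N*z) hE
  have hE2 : N^2*(N-1)*T + N*(N-2)*M ≤ s := by nlinarith [hEN, hsum]
  have h2 := mul_le_mul_of_nonneg_left hE2 (le_of_lt hs)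
  have h3 := mul_le_mul_of_nonneg_left hCS
    (mul_nonneg (by positivity : (0:ℝ) ≤ N^2) (by linarith : (0:ℝ) ≤ N-1))
  have hkeyG : N^2*(N-1)*M^2 + N*(N-2)*M*s ≤ s^2 := by nlinarith [h2, h3]
  have h4 := mul_le_mul_of_nonneg_left hkeyG (by linarith : (0:ℝ) ≤ N-1)
  have e1 : N^2*((N-1)*M)^2 = N^2*(s^2 + D*(N-1))^2 := by
    rw [mul_comm (N-1) M, hMD]
  have e2 : N*(N-2)*((N-1)*M)*s = N*(N-2)*(s^2 + D*(N-1))*s := by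
    rw [mul_comm (N-1) M, hMD]
  have hb : 0 < N*s + N - 1 := by linarith [mul_pos (by linarith : (0:ℝ) < N) hs]
  have hfac : 0 < s^2*((N*s-1)*(N*s+N-1)) :=
    mul_pos (pow_pos hs 2) (mul_pos (by linarith) hb)
  have hDN : 0 ≤ D*(N-1) := mul_nonneg hD (by linarith)
  have hnn1 : 0 ≤ 2*N^2*s^2*(D*(N-1)) :=
    mul_nonneg (by positivity : (0:ℝ) ≤ 2*N^2*s^2) hDN
  have hnn2 : 0 ≤ N^2*(D*(N-1))^2 := by positivity
  have hnn3 : 0 ≤ N*(N-2)*(D*(N-1))*s :=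
    mul_nonneg (mul_nonneg (mul_nonneg (by linarith) (by linarith)) hDN) (le_of_lt hs)
  linarith [h4, e1, e2, hfac, hnn1, hnn2, hnn3]

private lemma aux_mid (N s M D T Tm Ms : ℝ) (hN3 : 3 ≤ N) (hs : 0 < s) (hD : 0 ≤ D)
    (hMD : M*(N-1) = s^2 + D*(N-1)) (hCS : M^2 ≤ s*T)
    (hE : N*(N-1)*T + (N-2)*M = N*(N-1)*Tm - (N-2)*Ms)
    (hsum : N*(N-1)*Tm ≤ (N-2)*Ms + (N*(N-1)*s^2 - (N-2)*s)*s)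
    (hSmall : N*s ≤ 1) : N*s = 1 ∧ D = 0 := by
  have hEB : N*(N-1)*T + (N-2)*M ≤ N*(N-1)*s^3 - (N-2)*s^2 := by linarith
  have h2 := mul_le_mul_of_nonneg_left hEB (le_of_lt hs)
  have h3 := mul_le_mul_of_nonneg_left hCS
    (mul_nonneg (by linarith : (0:ℝ) ≤ N) (by linarith : (0:ℝ) ≤ N-1))
  have hkeyB : N*(N-1)*M^2 + (N-2)*M*s ≤ N*(N-1)*s^4 - (N-2)*s^3 := by
    nlinarith [h2, h3]
  have h4 := mul_le_mul_of_nonneg_left hkeyB (by linarith : (0:ℝ) ≤ N-1)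
  have e1 : N*((N-1)*M)^2 = N*(s^2 + D*(N-1))^2 := by
    rw [mul_comm (N-1) M, hMD]
  have e2 : (N-2)*((N-1)*M)*s = (N-2)*(s^2 + D*(N-1))*s := by
    rw [mul_comm (N-1) M, hMD]
  have hchain : N*(N-1)^2*D^2 + (N-1)*(2*N*s + (N-2))*s*D
      ≤ N*(N-2)*s^3*(N*s - 1) := by linarith [h4, e1, e2]
  have hterm1 : 0 ≤ N*(N-1)^2*D^2 := by positivity
  have hcoef : 0 < (N-1)*(2*N*s + (N-2))*s := by
    have h5 : 0 < 2*N*s := by positivity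
    exact mul_pos (mul_pos (by linarith : (0:ℝ) < N-1) (by linarith)) hs
  have hterm2 : 0 ≤ (N-1)*(2*N*s + (N-2))*s*D := mul_nonneg (le_of_lt hcoef) hD
  have hprod : 0 < N*(N-2)*s^3 :=
    mul_pos (mul_pos (by linarith) (by linarith)) (pow_pos hs 3)
  have h6 : 0 ≤ N*s - 1 := by
    by_contra h
    push_neg at h
    have h7 := mul_pos hprod (by linarith : (0:ℝ) < 1 - N*s)
    nlinarith [hchain, hterm1, hterm2, h7]
  have hNs : N*s = 1 := le_antisymm hSmall (by linarith)
  refine ⟨hNs, ?_⟩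
  by_contra hDne
  have hDpos : 0 < D := lt_of_le_of_ne hD (Ne.symm hDne)
  have h5 := mul_pos hcoef hDpos
  have hR : N*(N-2)*s^3*(N*s-1) = 0 := by
    have h8 : N*s - 1 = 0 := by linarith
    rw [h8, mul_zero]
  linarith [hchain, hterm1]

theorem stmt_1 (n : ℕ) (hn : 3 ≤ n) (x : Fin n → ℝ)
    (hx : ∀ i, 0 ≤ x i) (hsum : ∑ i, x i = 1) :
    (n : ℝ) * ∑ i, (x i) ^ 3 + 1 / ((n : ℝ) - 1) =
      ((2 * (n : ℝ) - 1) / ((n : ℝ) - 1)) * ∑ i, (x i) ^ 2 ↔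
    (∀ i, x i = 1 / (n : ℝ)) ∨
      ∃ i₀, x i₀ = 0 ∧ ∀ i, i ≠ i₀ → x i = 1 / ((n : ℝ) - 1) := by
  have hN3 : (3:ℝ) ≤ (n:ℝ) := by exact_mod_cast hn
  set N : ℝ := (n : ℝ) with hNdef
  have hN0 : (0:ℝ) < N := by linarith
  have hN1 : (0:ℝ) < N - 1 := by linarith
  have hN2 : (0:ℝ) < N - 2 := by linarith
  have hNe0 : N ≠ 0 := ne_of_gt hN0
  have hNe1 : N - 1 ≠ 0 := ne_of_gt hN1
  constructor
  · intro heq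
    set y : Fin n → ℝ := fun i => x i - 1/N with hy
    set p : Fin n → ℝ := fun i => max (y i) 0 with hp
    set m : Fin n → ℝ := fun i => max (-(y i)) 0 with hm
    have hyx : ∀ i, y i = x i - 1/N := fun i => by rw [hy]
    have hp0 : ∀ i, 0 ≤ p i := fun i => le_max_right _ _
    have hm0 : ∀ i, 0 ≤ m i := fun i => le_max_right _ _
    have hpm : ∀ i, p i - m i = y i := by
      intro i
      rcases le_total 0 (y i) with h | h
      · rw [hp, hm]; simp only
        rw [max_eq_left h, max_eq_right (by linarith : -(y i) ≤ 0)]; ring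
      · rw [hp, hm]; simp only
        rw [max_eq_right h, max_eq_left (by linarith : (0:ℝ) ≤ -(y i))]; ring
    have hmul : ∀ i, p i * m i = 0 := by
      intro i
      rcases le_total 0 (y i) with h | h
      · rw [hm]; simp only
        rw [max_eq_right (by linarith : -(y i) ≤ 0), mul_zero]
      · rw [hp]; simp only
        rw [max_eq_right h, zero_mul]
    have hmle : ∀ i, m i ≤ 1/N := by
      intro i
      rw [hm]; simp only
      apply max_le
      · have := hx i; rw [hy]; simp only; linarith
      · positivity
    have hysum : ∑ i, y i = 0 := by
      rw [hy]
      simp only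
      rw [Finset.sum_sub_distrib, hsum, Finset.sum_const, Finset.card_univ, Fintype.card_fin,
        nsmul_eq_mul]
      field_simp
      rw [hNdef]; ring
    -- the equality in shifted variables
    have E : N * ∑ i, (y i)^3 + (N-2)/(N-1) * ∑ i, (y i)^2 = 0 := by
      have hx2 : ∑ i, (y i)^2 = ∑ i, (x i)^2 - 1/N := by
        calc ∑ i, (y i)^2 = ∑ i, ((x i)^2 - (2/N)*(x i) + 1/N^2) :=
              Finset.sum_congr rfl (fun i _ => by rw [hy]; ring)
        _ = (∑ i, (x i)^2) - (2/N)*(∑ i, x i) + (n:ℝ)*(1/N^2) := by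
            rw [Finset.sum_add_distrib, Finset.sum_sub_distrib, ← Finset.mul_sum,
              Finset.sum_const, Finset.card_univ, Fintype.card_fin, nsmul_eq_mul]
        _ = ∑ i, (x i)^2 - 1/N := by rw [hsum, ← hNdef]; field_simp; ring
      have hx3 : ∑ i, (y i)^3 = ∑ i, (x i)^3 - (3/N)*∑ i, (x i)^2 + 2/N^2 := by
        calc ∑ i, (y i)^3 = ∑ i, ((x i)^3 - (3/N)*(x i)^2 + (3/N^2)*(x i) - 1/N^3) :=
              Finset.sum_congr rfl (fun i _ => by rw [hy]; ring)
        _ = ((∑ i, (x i)^3) - (3/N)*(∑ i, (x i)^2) + (3/N^2)*(∑ i, x i)) - (n:ℝ)*(1/N^3) := by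
            rw [Finset.sum_sub_distrib, Finset.sum_add_distrib, Finset.sum_sub_distrib,
              ← Finset.mul_sum, ← Finset.mul_sum,
              Finset.sum_const, Finset.card_univ, Fintype.card_fin, nsmul_eq_mul]
        _ = _ := by rw [hsum, ← hNdef]; field_simp; ring
      rw [hx2, hx3]
      field_simp at heq ⊢
      linear_combination N * heq
    -- split into positive and negative parts
    have hsq : ∑ i, (y i)^2 = ∑ i, (p i)^2 + ∑ i, (m i)^2 := by
      rw [← Finset.sum_add_distrib]
      refine Finset.sum_congr rfl (fun i _ => ?_)
      have h2 := hmul i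
      rw [← hpm i]
      linear_combination (-2 : ℝ) * h2
    have hcube : ∑ i, (y i)^3 = ∑ i, (p i)^3 - ∑ i, (m i)^3 := by
      rw [← Finset.sum_sub_distrib]
      refine Finset.sum_congr rfl (fun i _ => ?_)
      have h2 := hmul i
      rw [← hpm i]
      linear_combination (-3 * (p i - m i)) * h2
    set T := ∑ i, (p i)^3 with hT
    set Tm := ∑ i, (m i)^3 with hTm
    set M := ∑ i, (p i)^2 with hM
    set Ms := ∑ i, (m i)^2 with hMs
    set s := ∑ i, p i with hs
    rw [hsq, hcube] at E
    have hsm : ∑ i, m i = s := by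
      have h1 : ∑ i, (p i - m i) = 0 := by
        rw [Finset.sum_congr rfl (fun i _ => hpm i), hysum]
      rw [Finset.sum_sub_distrib] at h1
      linarith
    have hs0 : 0 ≤ s := Finset.sum_nonneg (fun i _ => hp0 i)
    have hT0 : 0 ≤ T := Finset.sum_nonneg (fun i _ => pow_nonneg (hp0 i) 3)
    have hmles : ∀ i, m i ≤ s := by
      intro i
      rw [← hsm]
      exact Finset.single_le_sum (fun j _ => hm0 j) (Finset.mem_univ i)
    rcases eq_or_lt_of_le hs0 with hseq | hspos
    · -- s = 0 : all coordinates equal 1/n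
      left
      have hallp : ∀ i, p i = 0 := by
        intro i
        exact (Finset.sum_eq_zero_iff_of_nonneg (fun j _ => hp0 j)).1 hseq.symm i
          (Finset.mem_univ i)
      have hallm : ∀ i, m i = 0 := by
        intro i
        have hzero : ∑ i, m i = 0 := by rw [hsm, ← hseq]
        exact (Finset.sum_eq_zero_iff_of_nonneg (fun j _ => hm0 j)).1 hzero i
          (Finset.mem_univ i)
      intro i
      have h1 := hpm i
      rw [hallp i, hallm i, hyx i] at h1
      linarith
    · -- s > 0
      have hsnn : (0:ℝ) ≤ s := le_of_lt hspos
      obtain ⟨i₀, hi₀⟩ : ∃ i, m i ≠ 0 := by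
        by_contra hc
        push_neg at hc
        rw [Finset.sum_eq_zero (fun i _ => hc i)] at hsm
        exact absurd hsm (ne_of_lt hspos)
      have hpi₀ : p i₀ = 0 := by
        rcases mul_eq_zero.1 (hmul i₀) with h | h
        · exact h
        · exact absurd h hi₀
      have hmem : i₀ ∈ (Finset.univ : Finset (Fin n)) := Finset.mem_univ i₀
      have hcard : ((Finset.univ : Finset (Fin n)).erase i₀).card = n - 1 := by
        simp [Finset.card_erase_of_mem, Fintype.card_fin]
      have hcast : ((n - 1 : ℕ) : ℝ) = N - 1 := by
        rw [Nat.cast_sub (by omega)]; simp [hNdef]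
      have hserase : ∑ i ∈ Finset.univ.erase i₀, p i = s := by
        have h1 := Finset.sum_erase_add Finset.univ p hmem
        rw [hpi₀] at h1
        rw [hs]; linarith
      have hMerase : ∑ i ∈ Finset.univ.erase i₀, (p i)^2 = M := by
        have h1 := Finset.sum_erase_add Finset.univ (fun i => (p i)^2) hmem
        simp only [hpi₀] at h1
        rw [hM]
        simpa using h1
      set D := ∑ i ∈ Finset.univ.erase i₀, (p i - s/(N-1))^2 with hD
      have hD0 : 0 ≤ D := Finset.sum_nonneg (fun i _ => sq_nonneg _)
      have hDexp : D = M - s^2/(N-1) := by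
        rw [hD]
        calc ∑ i ∈ Finset.univ.erase i₀, (p i - s/(N-1))^2
            = ∑ i ∈ Finset.univ.erase i₀,
                ((p i)^2 - (2*s/(N-1))*(p i) + (s/(N-1))^2) :=
              Finset.sum_congr rfl (fun i _ => by ring)
          _ = (∑ i ∈ Finset.univ.erase i₀, (p i)^2)
                - (2*s/(N-1))*(∑ i ∈ Finset.univ.erase i₀, p i)
                + ((n-1 : ℕ):ℝ)*((s/(N-1))^2) := by
              rw [Finset.sum_add_distrib, Finset.sum_sub_distrib, ← Finset.mul_sum,
                Finset.sum_const, hcard, nsmul_eq_mul]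
          _ = M - s^2/(N-1) := by
              rw [hserase, hMerase, hcast]
              field_simp
              ring
      have hMD' : M*(N-1) = s^2 + D*(N-1) := by
        rw [hDexp]
        field_simp
        ring
      have hMpos : 0 < M := aux_Mpos N s M D hN3 hspos hD0 hMD'
      have hCS : M^2 ≤ s * T := by
        have h1 := Finset.sum_sq_le_sum_mul_sum_of_sq_eq_mul Finset.univ
          (r := fun i => (p i)^2) (f := fun i => p i) (g := fun i => (p i)^3)
          (fun i _ => hp0 i) (fun i _ => pow_nonneg (hp0 i) 3) (fun i _ => by ring)
        simpa [← hM, ← hs, ← hT] using h1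
      have E' : N*(N-1)*T + (N-2)*M = N*(N-1)*Tm - (N-2)*Ms := by
        field_simp at E
        linarith
      rcases lt_or_ge 1 (N*s) with hBig | hSmall
      · -- N*s > 1 : impossible
        exfalso
        have hsumG : N^2*(N-1)*Tm ≤ N*(N-2)*Ms + s := by
          have hpt : ∀ i, N^2*(N-1)*(m i)^3 ≤ N*(N-2)*(m i)^2 + m i := by
            intro i
            apply aux_pt_global N (m i) hN3 (hm0 i)
            have h1 := hmle i
            rw [le_div_iff₀ hN0] at h1
            linarith
          calc N^2*(N-1)*Tm = ∑ i, N^2*(N-1)*(m i)^3 := by rw [hTm, Finset.mul_sum]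
            _ ≤ ∑ i, (N*(N-2)*(m i)^2 + m i) := Finset.sum_le_sum (fun i _ => hpt i)
            _ = N*(N-2)*Ms + s := by
                rw [Finset.sum_add_distrib, ← Finset.mul_sum, hsm, hMs]
        exact aux_big N s M D T Tm Ms hN3 hspos hD0 hMD' hCS E' hsumG hBig
      · -- N*s ≤ 1
        rcases lt_or_ge (N*(N-1)*s) (N-2) with hA | hcge
        · -- very small s : impossible
          exfalso
          have hsumA : N*(N-1)*Tm ≤ (N-2)*Ms := by
            calc N*(N-1)*Tm = ∑ i, N*(N-1)*(m i)^3 := by rw [hTm, Finset.mul_sum]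
              _ ≤ ∑ i, (N-2)*(m i)^2 := Finset.sum_le_sum
                  (fun i _ => aux_pt_small N s (m i) hN3 (hm0 i) (hmles i) hA)
              _ = (N-2)*Ms := by rw [← Finset.mul_sum, hMs]
          exact aux_smallA N M T Tm Ms hN3 hMpos hT0 E' hsumA
        · -- main region
          have hsumB : N*(N-1)*Tm ≤ (N-2)*Ms + (N*(N-1)*s^2 - (N-2)*s)*s := by
            calc N*(N-1)*Tm = ∑ i, N*(N-1)*(m i)^3 := by rw [hTm, Finset.mul_sum]
              _ ≤ ∑ i, ((N-2)*(m i)^2 + (N*(N-1)*s^2 - (N-2)*s)*(m i)) :=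
                  Finset.sum_le_sum
                    (fun i _ => aux_pt_chord N s (m i) hN3 (hm0 i) (hmles i) hcge)
              _ = (N-2)*Ms + (N*(N-1)*s^2 - (N-2)*s)*s := by
                  rw [Finset.sum_add_distrib, ← Finset.mul_sum, ← Finset.mul_sum, hsm, hMs]
          obtain ⟨hNs1, hDzero⟩ :=
            aux_mid N s M D T Tm Ms hN3 hspos hD0 hMD' hCS E' hsumB hSmall
          right
          have hsv : s = 1/N := by
            rw [eq_div_iff hNe0]
            linarith [hNs1]
          have hxo : ∀ i, i ≠ i₀ → x i = 1/(N-1) := by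
            intro i hne
            have hmemi : i ∈ Finset.univ.erase i₀ :=
              Finset.mem_erase.2 ⟨hne, Finset.mem_univ i⟩
            have hsum0 : ∑ i ∈ Finset.univ.erase i₀, (p i - s/(N-1))^2 = 0 := by
              rw [← hD]; exact hDzero
            have hz : (p i - s/(N-1))^2 = 0 :=
              (Finset.sum_eq_zero_iff_of_nonneg
                (fun j _ => sq_nonneg (p j - s/(N-1)))).1 hsum0 i hmemi
            have hpv : p i = s/(N-1) := by
              have h1 := sq_eq_zero_iff.1 hz
              linarith
            have hppos : 0 < p i := by
              rw [hpv]; positivity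
            have hmz : m i = 0 := by
              rcases mul_eq_zero.1 (hmul i) with h | h
              · exact absurd h (ne_of_gt hppos)
              · exact h
            have hyv := hpm i
            rw [hpv, hmz, hyx i] at hyv
            have hxi : x i = s/(N-1) + 1/N := by linarith
            rw [hsv] at hxi
            rw [hxi]
            field_simp
            ring
          refine ⟨i₀, ?_, hxo⟩
          have hsplit := Finset.sum_erase_add Finset.univ x hmem
          rw [hsum] at hsplit
          have hxsum : ∑ i ∈ Finset.univ.erase i₀, x i = 1 := by
            calc ∑ i ∈ Finset.univ.erase i₀, x i
                = ∑ i ∈ Finset.univ.erase i₀, 1/(N-1) :=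
                  Finset.sum_congr rfl
                    (fun i hi => hxo i (Finset.ne_of_mem_erase hi))
              _ = ((n-1 : ℕ):ℝ)*(1/(N-1)) := by
                  rw [Finset.sum_const, hcard, nsmul_eq_mul]
              _ = 1 := by rw [hcast]; field_simp
          linarith
  · rintro (h | ⟨i₀, h0, hrest⟩)
    · have h2 : ∑ i, x i ^ 2 = N * (1/N)^2 := by
        simp [h, Finset.sum_const, Fintype.card_fin, nsmul_eq_mul]
        exact Or.inl hNdef.symm
      have h3 : ∑ i, x i ^ 3 = N * (1/N)^3 := by
        simp [h, Finset.sum_const, Fintype.card_fin, nsmul_eq_mul]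
        exact Or.inl hNdef.symm
      rw [h2, h3]
      field_simp
      ring
    · have hmem : i₀ ∈ (Finset.univ : Finset (Fin n)) := Finset.mem_univ i₀
      have hcard : ((Finset.univ : Finset (Fin n)).erase i₀).card = n - 1 := by
        simp [Finset.card_erase_of_mem, Fintype.card_fin]
      have hcast : ((n - 1 : ℕ) : ℝ) = N - 1 := by
        rw [Nat.cast_sub (by omega)]; simp [hNdef]
      have h2 : ∑ i, x i ^ 2 = (N-1) * (1/(N-1))^2 := by
        rw [← Finset.sum_erase_add _ _ hmem, h0]
        rw [Finset.sum_congr rfl (fun i hi => by rw [hrest i (Finset.ne_of_mem_erase hi)])]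
        simp [Finset.sum_const, hcard, hcast, nsmul_eq_mul]
      have h3 : ∑ i, x i ^ 3 = (N-1) * (1/(N-1))^3 := by
        rw [← Finset.sum_erase_add _ _ hmem, h0]
        rw [Finset.sum_congr rfl (fun i hi => by rw [hrest i (Finset.ne_of_mem_erase hi)])]
        simp [Finset.sum_const, hcard, hcast, nsmul_eq_mul]
      rw [h2, h3]
      field_simp
      ring
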